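/- (Weyl group lemma from the proof of Lemma 2.17, for the symmetric group.) Let b_M : {1,…,n} → {1,…,r} and b_L : {1,…,n} → {1,…,s} be monotone nondecreasing surjections, and let W_M = {τ ∈ S_n : b_M(τ(x)) = b_M(x) for all x} and W_L = {τ ∈ S_n : b_L(τ(x)) = b_L(x) for all x} be the corresponding Young subgroups. Suppose σ ∈ S_n has the property that for all i < j with b_M(i) ≠ b_M(j), either σ(i) < σ(j) or b_L(σ(i)) = b_L(σ(j)) (i.e. σ maps every positive root outside Φ_M⁺ into Φ⁺ ∪ Φ_L⁻). Then σ = σ_L ∘ σ_M for some σ_L ∈ W_L and σ_M ∈ W_M. -/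

import Mathlib

open Finset

/-- If `S` and `T` are "cross-block downward closed" w.r.t. a monotone surjection `bM`
and have the same cardinality, then they meet each `bM`-fiber in sets of unequal
cardinality leads to contradiction. -/
private lemma aux_main' {n r : ℕ} (bM : Fin n → Fin r) (hbM : Monotone bM)
    (S T : Finset (Fin n))
    (hS : ∀ i j : Fin n, i < j → bM i ≠ bM j → j ∈ S → i ∈ S)
    (hT : ∀ i j : Fin n, i < j → bM i ≠ bM j → j ∈ T → i ∈ T)
    (hcard : S.card = T.card) (a : Fin r)
    (hlt : (T.filter (fun x => bM x = a)).card < (S.filter (fun x => bM x = a)).card) :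
    False := by
  have key : ∀ i : Fin r,
      (T.filter (fun x => bM x = i)).card ≤ (S.filter (fun x => bM x = i)).card := by
    intro i
    rcases lt_trichotomy i a with h | h | h
    · -- i < a : S is full on fiber i
      have hSa : 0 < (S.filter (fun x => bM x = a)).card :=
        lt_of_le_of_lt (Nat.zero_le _) hlt
      obtain ⟨j, hj⟩ := card_pos.mp hSa
      rw [mem_filter] at hj
      have hfull : (univ.filter (fun x => bM x = i)) ⊆ S.filter (fun x => bM x = i) := by
        intro x hx
        rw [mem_filter] at hx ⊢
        have hbx : bM x = i := hx.2
        have hij : x < j := by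
          by_contra hc
          push_neg at hc
          have := hbM hc
          rw [hj.2, hbx] at this
          exact absurd this (not_le_of_gt h)
        refine ⟨hS x j hij ?_ hj.1, hbx⟩
        rw [hj.2, hbx]; exact ne_of_lt h
      calc (T.filter (fun x => bM x = i)).card
          ≤ (univ.filter (fun x => bM x = i)).card :=
            card_le_card (filter_subset_filter _ (subset_univ _))
        _ ≤ _ := card_le_card hfull
    · exact le_of_lt (h ▸ hlt)
    · -- i > a : T is empty on fiber i
      rcases Nat.eq_zero_or_pos (T.filter (fun x => bM x = i)).card with h0 | h0
      · omega
      obtain ⟨j, hj⟩ := card_pos.mp h0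
      rw [mem_filter] at hj
      -- then T is full on fiber a, contradicting hlt
      have hfull : (univ.filter (fun x => bM x = a)) ⊆ T.filter (fun x => bM x = a) := by
        intro x hx
        rw [mem_filter] at hx ⊢
        have hbx : bM x = a := hx.2
        have hij : x < j := by
          by_contra hc
          push_neg at hc
          have := hbM hc
          rw [hj.2, hbx] at this
          exact absurd this (not_le_of_gt h)
        refine ⟨hT x j hij ?_ hj.1, hbx⟩
        rw [hj.2, hbx]; exact ne_of_lt h
      have h1 : (S.filter (fun x => bM x = a)).card ≤ (T.filter (fun x => bM x = a)).card :=
        le_trans (card_le_card (filter_subset_filter _ (subset_univ _)))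
          (card_le_card hfull)
      omega
  have hsum : T.card < S.card := by
    rw [card_eq_sum_card_fiberwise (f := bM) (t := univ) (fun x _ => mem_univ _),
        card_eq_sum_card_fiberwise (f := bM) (t := univ) (fun x _ => mem_univ _)]
    exact sum_lt_sum (fun i _ => key i) ⟨a, mem_univ a, hlt⟩
  omega

/-- Equal fiberwise counts for two cross-block-downward-closed sets. -/
private lemma aux_main {n r : ℕ} (bM : Fin n → Fin r) (hbM : Monotone bM)
    (S T : Finset (Fin n))
    (hS : ∀ i j : Fin n, i < j → bM i ≠ bM j → j ∈ S → i ∈ S)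
    (hT : ∀ i j : Fin n, i < j → bM i ≠ bM j → j ∈ T → i ∈ T)
    (hcard : S.card = T.card) (a : Fin r) :
    (S.filter (fun x => bM x = a)).card = (T.filter (fun x => bM x = a)).card := by
  by_contra hne
  rcases Nat.lt_or_ge (T.filter (fun x => bM x = a)).card
      (S.filter (fun x => bM x = a)).card with h | h
  · exact aux_main' bM hbM S T hS hT hcard a h
  · exact aux_main' bM hbM T S hT hS hcard.symm a (by omega)

open Finset

section

variable {n r s : ℕ} (bM : Fin n → Fin r) (bL : Fin n → Fin s)
variable (σ : Equiv.Perm (Fin n))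

/-- Cumulative counts agree on each `bM`-fiber. -/
private lemma le_counts (hbM : Monotone bM) (hbL : Monotone bL)
    (hσ : ∀ i j : Fin n, i < j → bM i ≠ bM j → σ i < σ j ∨ bL (σ i) = bL (σ j))
    (t : ℕ) (a : Fin r) :
    (univ.filter (fun x => bM x = a ∧ (bL (σ x) : ℕ) ≤ t)).card =
      (univ.filter (fun x => bM x = a ∧ (bL x : ℕ) ≤ t)).card := by
  set T : Finset (Fin n) := univ.filter (fun x => (bL (σ x) : ℕ) ≤ t) with hTdef
  set S : Finset (Fin n) := univ.filter (fun x => (bL x : ℕ) ≤ t) with hSdef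
  have hT : ∀ i j : Fin n, i < j → bM i ≠ bM j → j ∈ T → i ∈ T := by
    intro i j hij hb hj
    rw [hTdef, mem_filter] at hj ⊢
    refine ⟨mem_univ _, ?_⟩
    rcases hσ i j hij hb with h | h
    · have := hbL (le_of_lt h)
      have := Fin.le_def.mp this
      omega
    · rw [h]; exact hj.2
  have hS : ∀ i j : Fin n, i < j → bM i ≠ bM j → j ∈ S → i ∈ S := by
    intro i j hij _ hj
    rw [hSdef, mem_filter] at hj ⊢
    refine ⟨mem_univ _, ?_⟩
    have := Fin.le_def.mp (hbL (le_of_lt hij))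
    omega
  have hcard : T.card = S.card := by
    apply card_bij (fun x _ => σ x)
    · intro x hx
      rw [hTdef, mem_filter] at hx
      rw [hSdef, mem_filter]
      exact ⟨mem_univ _, hx.2⟩
    · intro x _ y _ h
      exact σ.injective h
    · intro y hy
      rw [hSdef, mem_filter] at hy
      refine ⟨σ.symm y, ?_, by simp⟩
      rw [hTdef, mem_filter]
      simpa using hy.2
  have h1 : univ.filter (fun x => bM x = a ∧ (bL (σ x) : ℕ) ≤ t)
      = T.filter (fun x => bM x = a) := by
    rw [hTdef, filter_filter]
    apply filter_congr
    intro x _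
    simp [and_comm]
  have h2 : univ.filter (fun x => bM x = a ∧ (bL x : ℕ) ≤ t)
      = S.filter (fun x => bM x = a) := by
    rw [hSdef, filter_filter]
    apply filter_congr
    intro x _
    simp [and_comm]
  rw [h1, h2]
  exact aux_main bM hbM T S hT hS hcard a

/-- splitting a cumulative count -/
private lemma split_count (f : Fin n → ℕ) (a : Fin r) (t : ℕ) :
    (univ.filter (fun x => bM x = a ∧ f x ≤ t + 1)).card =
      (univ.filter (fun x => bM x = a ∧ f x ≤ t)).card +
        (univ.filter (fun x => bM x = a ∧ f x = t + 1)).card := by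
  rw [← card_union_of_disjoint]
  · congr 1
    ext x
    simp only [mem_union, mem_filter, mem_univ, true_and]
    omega
  · rw [disjoint_left]
    intro x h1 h2
    simp only [mem_filter, mem_univ, true_and] at h1 h2
    omega

/-- Exact counts agree on each `bM`-fiber. -/
private lemma eq_counts (hbM : Monotone bM) (hbL : Monotone bL)
    (hσ : ∀ i j : Fin n, i < j → bM i ≠ bM j → σ i < σ j ∨ bL (σ i) = bL (σ j))
    (t : ℕ) (a : Fin r) :
    (univ.filter (fun x => bM x = a ∧ (bL (σ x) : ℕ) = t)).card =
      (univ.filter (fun x => bM x = a ∧ (bL x : ℕ) = t)).card := by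
  cases t with
  | zero =>
      have h := le_counts bM bL σ hbM hbL hσ 0 a
      have e1 : univ.filter (fun x => bM x = a ∧ (bL (σ x) : ℕ) = 0)
          = univ.filter (fun x => bM x = a ∧ (bL (σ x) : ℕ) ≤ 0) := by
        apply filter_congr; intro x _; constructor <;> (intro h; exact ⟨h.1, by omega⟩)
      have e2 : univ.filter (fun x => bM x = a ∧ (bL x : ℕ) = 0)
          = univ.filter (fun x => bM x = a ∧ (bL x : ℕ) ≤ 0) := by
        apply filter_congr; intro x _; constructor <;> (intro h; exact ⟨h.1, by omega⟩)
      rw [e1, e2, h]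
  | succ t =>
      have h1 := le_counts bM bL σ hbM hbL hσ t a
      have h2 := le_counts bM bL σ hbM hbL hσ (t + 1) a
      have s1 := split_count bM (fun x => (bL (σ x) : ℕ)) a t
      have s2 := split_count bM (fun x => (bL x : ℕ)) a t
      omega

end

/-- Gluing: if two functions have equal fiber counts, a permutation matches them. -/
private lemma exists_perm_comp {β : Type*} [DecidableEq β] {n : ℕ} (k j : Fin n → β)
    (h : ∀ b : β, (univ.filter (fun x => k x = b)).card =
        (univ.filter (fun x => j x = b)).card) :
    ∃ π : Equiv.Perm (Fin n), ∀ x, j (π x) = k x := by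
  have hcard : ∀ b : β, Fintype.card {x // k x = b} = Fintype.card {x // j x = b} := by
    intro b
    rw [Fintype.card_subtype, Fintype.card_subtype]
    exact h b
  let e : ∀ b : β, {x // k x = b} ≃ {x // j x = b} :=
    fun b => Fintype.equivOfCardEq (hcard b)
  let f : Fin n → Fin n := fun x => (e (k x) ⟨x, rfl⟩).val
  have key : ∀ x, j (f x) = k x := fun x => (e (k x) ⟨x, rfl⟩).2
  have aux : ∀ (y : Fin n) (b : β) (hb : k y = b), ((e b) ⟨y, hb⟩).val = f y := by
    intro y b hb
    subst hb
    rfl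
  have hinj : Function.Injective f := by
    intro x y hxy
    have hk : k x = k y := by rw [← key x, ← key y, hxy]
    have h2 : (e (k x)) ⟨x, rfl⟩ = (e (k x)) ⟨y, hk.symm⟩ := by
      apply Subtype.ext
      show f x = _
      rw [hxy, aux y (k x) hk.symm]
    have := (e (k x)).injective h2
    exact congrArg Subtype.val this
  have hbij := Finite.injective_iff_bijective.mp hinj
  exact ⟨Equiv.ofBijective f hbij, fun x => key x⟩

/-- Weyl group lemma from the proof of Lemma 2.17, for the symmetric
group: if `σ ∈ S_n` maps every positive root outside `Φ_M⁺` into `Φ⁺ ∪ Φ_L⁻` (i.e. for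
all `i < j` in different `b_M`-blocks, either `σ i < σ j` or `σ i, σ j` are in the same
`b_L`-block), then `σ = σ_L ∘ σ_M` with `σ_L ∈ W_L` and `σ_M ∈ W_M`. -/
theorem statement14 (n r s : ℕ)
    (bM : Fin n → Fin r) (hbM : Monotone bM) (hbMs : Function.Surjective bM)
    (bL : Fin n → Fin s) (hbL : Monotone bL) (hbLs : Function.Surjective bL)
    (σ : Equiv.Perm (Fin n))
    (hσ : ∀ i j : Fin n, i < j → bM i ≠ bM j → σ i < σ j ∨ bL (σ i) = bL (σ j)) :
    ∃ σL σM : Equiv.Perm (Fin n),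
      (∀ x, bL (σL x) = bL x) ∧ (∀ x, bM (σM x) = bM x) ∧ σ = σL * σM := by
  obtain ⟨π, hπ⟩ := exists_perm_comp
    (fun x => ((bM x, (bL (σ x) : ℕ)) : Fin r × ℕ))
    (fun x => ((bM x, (bL x : ℕ)) : Fin r × ℕ))
    (by
      rintro ⟨a, t⟩
      have e1 : (univ.filter (fun x => ((bM x, (bL (σ x) : ℕ)) : Fin r × ℕ) = (a, t)))
          = univ.filter (fun x => bM x = a ∧ (bL (σ x) : ℕ) = t) := by
        apply filter_congr; intro x _; simp [Prod.ext_iff]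
      have e2 : (univ.filter (fun x => ((bM x, (bL x : ℕ)) : Fin r × ℕ) = (a, t)))
          = univ.filter (fun x => bM x = a ∧ (bL x : ℕ) = t) := by
        apply filter_congr; intro x _; simp [Prod.ext_iff]
      rw [e1, e2]
      exact eq_counts bM bL σ hbM hbL hσ t a)
  have hπM : ∀ x, bM (π x) = bM x := fun x => congrArg Prod.fst (hπ x)
  have hπL : ∀ x, bL (π x) = bL (σ x) := by
    intro x
    have := congrArg Prod.snd (hπ x)
    exact Fin.ext this
  refine ⟨σ * π⁻¹, π, ?_, hπM, ?_⟩
  · intro x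
    have h1 : bL (π (π⁻¹ x)) = bL (σ (π⁻¹ x)) := hπL (π⁻¹ x)
    simp only [← Equiv.Perm.mul_apply, mul_inv_cancel, Equiv.Perm.one_apply] at h1
    show bL (σ (π⁻¹ x)) = bL x
    exact h1.symm
  · group
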